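/- Abstract monotonicity of the two-variable entropy function: suppose given, for each t ∈ ℝ, a real Hilbert space X_t; for each pair t ≤ t̂, a continuous linear map ρ_{t,t̂} : X_{t̂} → X_t with ‖ρ_{t,t̂}‖ ≤ 1; for each s, t ∈ ℝ, an orthogonal projection Q_{s,t} on X_t (idempotent and self-adjoint) such that (1) Q_{ŝ,t} ∘ Q_{s,t} = Q_{s,t} whenever s ≤ ŝ, (2) Q_{s,t} = id whenever s ≥ t, and (3) Q_{s,t} ∘ ρ_{t,t̂} = ρ_{t,t̂} ∘ Q_{s,t̂} whenever t ≤ t̂. Suppose further given vectors v_t ∈ X_t with ρ_{t,t̂}(v_{t̂}) = v_t for t ≤ t̂, and define T(s,t) := ‖Q_{s,t} v_t‖². Then: (a) T(s,t) is nondecreasing in t for each fixed s; (b) T(s,t) is nondecreasing in s for each fixed t, and T(s,t) = T(t,t) for s ≥ t; (c) t ↦ T(t,t) is nondecreasing; (d) for all s ≤ ŝ and t ≤ t̂ one has the rectangle inequality T(ŝ,t̂) − T(ŝ,t) − T(s,t̂) + T(s,t) ≥ 0. -/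

import Mathlib

open ContinuousLinearMap in
/-- If `P, P'` are orthogonal projections with `P' ∘ P = P`, then
`‖P' x‖² - ‖P x‖² = ‖(P' - P) x‖²`. -/
lemma proj_diff_sq_aux {E : Type*} [NormedAddCommGroup E] [InnerProductSpace ℝ E]
    [CompleteSpace E] (P P' : E →L[ℝ] E) (hP : P ∘L P = P) (hP' : P' ∘L P' = P')
    (hsa : IsSelfAdjoint P) (hsa' : IsSelfAdjoint P') (hP'P : P' ∘L P = P) (x : E) :
    ‖P' x‖ ^ 2 - ‖P x‖ ^ 2 = ‖(P' - P) x‖ ^ 2 := by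
  have hPP' : P ∘L P' = P := by
    have h1 := congrArg ContinuousLinearMap.adjoint hP'P
    rwa [ContinuousLinearMap.adjoint_comp, hsa.adjoint_eq, hsa'.adjoint_eq] at h1
  have hsub : (P' - P) ∘L (P' - P) = P' - P := by
    rw [ContinuousLinearMap.comp_sub, ContinuousLinearMap.sub_comp,
      ContinuousLinearMap.sub_comp, hP, hP', hP'P, hPP']
    abel
  have hsasub : IsSelfAdjoint (P' - P) := hsa'.sub hsa
  have key : ∀ (T : E →L[ℝ] E), IsSelfAdjoint T → T ∘L T = T →
      ‖T x‖ ^ 2 = inner ℝ (T x) x := by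
    intro T hT hTT
    have h1 : inner ℝ (T (T x)) x = (inner ℝ (T x) (T x) : ℝ) := by
      have := ContinuousLinearMap.adjoint_inner_left T x (T x)
      rwa [hT.adjoint_eq] at this
    have h2 : T (T x) = T x := by
      have := congrFun (congrArg DFunLike.coe hTT) x
      simpa using this
    rw [← real_inner_self_eq_norm_sq, ← h1, h2]
  rw [key P hsa hP, key P' hsa' hP', key (P' - P) hsasub hsub,
    ContinuousLinearMap.sub_apply, inner_sub_left]

theorem abstract_two_variable_entropy_monotonicity
    (X : ℝ → Type*) [∀ t, NormedAddCommGroup (X t)] [∀ t, InnerProductSpace ℝ (X t)]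
    [∀ t, CompleteSpace (X t)]
    (ρ : ∀ t t' : ℝ, t ≤ t' → (X t' →L[ℝ] X t))
    (hρnorm : ∀ (t t' : ℝ) (h : t ≤ t'), ‖ρ t t' h‖ ≤ 1)
    (Q : ℝ → ∀ t : ℝ, X t →L[ℝ] X t)
    (hQidem : ∀ s t, (Q s t) ∘L (Q s t) = Q s t)
    (hQsa : ∀ s t, IsSelfAdjoint (Q s t))
    (hQmono : ∀ s s' t, s ≤ s' → (Q s' t) ∘L (Q s t) = Q s t)
    (hQone : ∀ s t, t ≤ s → Q s t = ContinuousLinearMap.id ℝ (X t))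
    (hQρ : ∀ (s t t' : ℝ) (h : t ≤ t'), (Q s t) ∘L (ρ t t' h) = (ρ t t' h) ∘L (Q s t'))
    (v : ∀ t, X t)
    (hv : ∀ (t t' : ℝ) (h : t ≤ t'), ρ t t' h (v t') = v t) :
    (∀ s : ℝ, Monotone fun t => ‖Q s t (v t)‖ ^ 2) ∧
    (∀ t : ℝ, Monotone fun s => ‖Q s t (v t)‖ ^ 2) ∧
    (∀ s t : ℝ, t ≤ s → ‖Q s t (v t)‖ ^ 2 = ‖Q t t (v t)‖ ^ 2) ∧
    (Monotone fun t => ‖Q t t (v t)‖ ^ 2) ∧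
    (∀ s s' t t' : ℝ, s ≤ s' → t ≤ t' →
      0 ≤ ‖Q s' t' (v t')‖ ^ 2 - ‖Q s' t (v t)‖ ^ 2
          - ‖Q s t' (v t')‖ ^ 2 + ‖Q s t (v t)‖ ^ 2) := by
  -- contraction property of ρ
  have hcontr : ∀ (t t' : ℝ) (h : t ≤ t') (x : X t'), ‖ρ t t' h x‖ ≤ ‖x‖ := by
    intro t t' h x
    calc ‖ρ t t' h x‖ ≤ ‖ρ t t' h‖ * ‖x‖ := (ρ t t' h).le_opNorm x
      _ ≤ 1 * ‖x‖ := mul_le_mul_of_nonneg_right (hρnorm t t' h) (norm_nonneg x)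
      _ = ‖x‖ := one_mul _
  -- pointwise intertwining
  have hpt : ∀ (s t t' : ℝ) (h : t ≤ t') (x : X t'),
      Q s t (ρ t t' h x) = ρ t t' h (Q s t' x) := by
    intro s t t' h x
    have := congrFun (congrArg DFunLike.coe (hQρ s t t' h)) x
    simpa using this
  -- (a) monotone in t
  have hA : ∀ s : ℝ, Monotone fun t => ‖Q s t (v t)‖ ^ 2 := by
    intro s t t' htt'
    simp only
    have he : Q s t (v t) = ρ t t' htt' (Q s t' (v t')) := by
      rw [← hv t t' htt', hpt]
    have hle : ‖Q s t (v t)‖ ≤ ‖Q s t' (v t')‖ := by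
      rw [he]; exact hcontr t t' htt' _
    exact pow_le_pow_left₀ (norm_nonneg _) hle 2
  -- key difference identity
  have hkey : ∀ (s s' t : ℝ), s ≤ s' →
      ‖Q s' t (v t)‖ ^ 2 - ‖Q s t (v t)‖ ^ 2 = ‖(Q s' t - Q s t) (v t)‖ ^ 2 := by
    intro s s' t h
    exact proj_diff_sq_aux (Q s t) (Q s' t) (hQidem s t) (hQidem s' t)
      (hQsa s t) (hQsa s' t) (hQmono s s' t h) (v t)
  -- (b) monotone in s
  have hB : ∀ t : ℝ, Monotone fun s => ‖Q s t (v t)‖ ^ 2 := by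
    intro t s s' hss'
    simp only
    have := hkey s s' t hss'
    nlinarith [sq_nonneg ‖(Q s' t - Q s t) (v t)‖]
  -- T(s,t) = T(t,t) for s ≥ t
  have hC : ∀ s t : ℝ, t ≤ s → ‖Q s t (v t)‖ ^ 2 = ‖Q t t (v t)‖ ^ 2 := by
    intro s t hts
    rw [hQone s t hts, hQone t t le_rfl]
  -- (c) diagonal monotone
  have hD : Monotone fun t => ‖Q t t (v t)‖ ^ 2 := by
    intro t t' htt'
    simp only
    calc ‖Q t t (v t)‖ ^ 2 ≤ ‖Q t t' (v t')‖ ^ 2 := hA t htt'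
      _ ≤ ‖Q t' t' (v t')‖ ^ 2 := hB t' htt'
  refine ⟨hA, hB, hC, hD, ?_⟩
  -- (d) rectangle inequality
  intro s s' t t' hss' htt'
  have hx : (Q s' t - Q s t) (v t) = ρ t t' htt' ((Q s' t' - Q s t') (v t')) := by
    simp only [ContinuousLinearMap.sub_apply, map_sub]
    rw [← hv t t' htt', hpt s' t t' htt', hpt s t t' htt']
  have hle : ‖(Q s' t - Q s t) (v t)‖ ≤ ‖(Q s' t' - Q s t') (v t')‖ := by
    rw [hx]; exact hcontr t t' htt' _
  have h1 := hkey s s' t hss'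
  have h2 := hkey s s' t' hss'
  have hsq : ‖(Q s' t - Q s t) (v t)‖ ^ 2 ≤ ‖(Q s' t' - Q s t') (v t')‖ ^ 2 :=
    pow_le_pow_left₀ (norm_nonneg _) hle 2
  linarith
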